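/- Let N ≥ 1 and let q_1,…,q_N be rational numbers. Let f ∈ ℂ[x_1,…,x_{N+1}] be a polynomial such that every exponent vector α in the support of f satisfies Σ_{i=1}^N α_i q_i + α_{N+1}/2 = 1, and such that f(−x_1, x_2,…,x_N, −x_{N+1}) = f(x_1,…,x_{N+1}) (equivalently, α_1 + α_{N+1} is even for every α in the support of f). Then there exists a unique polynomial f̂ ∈ ℂ[x_1,…,x_{N+1}] satisfying f̂(x_1^2, x_2, …, x_N, x_{N+1}) = f(x_1, x_2, …, x_N, x_1·x_{N+1}), and every exponent vector β in the support of f̂ satisfies 2q_1·β_1 + Σ_{i=2}^N q_i β_i + (1/2 − q_1)·β_{N+1} = 1. In other words, the lift of f to the first chart of the crepant resolution of ℂ^{N+1}/(ℤ/2ℤ) is quasihomogeneous with reduced weights (2q_1, q_2, …, q_N, 1/2 − q_1). -/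

import Mathlib

open MvPolynomial

lemma aeval_mono_mono {σ : Type*} (d : σ → (σ →₀ ℕ)) (m : σ →₀ ℕ) (c : ℂ) :
    aeval (fun i => monomial (d i) (1 : ℂ)) (monomial m c)
      = monomial (m.sum fun i k => k • d i) c := by
  rw [MvPolynomial.aeval_monomial, monomial_finsupp_sum_index, MvPolynomial.algebraMap_eq]
  congr 1
  refine Finsupp.prod_congr fun i hi => ?_
  rw [MvPolynomial.monomial_pow, one_pow]

/-- Let `f ∈ ℂ[x_1,…,x_{N+1}]` be quasihomogeneous of degree `1` for reduced weights
`(q_1,…,q_N,1/2)` and invariant under `x_1 ↦ -x_1, x_{N+1} ↦ -x_{N+1}` (i.e.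
`α_1 + α_{N+1}` is even on the support). Then there is a unique polynomial `f̂` with
`f̂(x_1^2, x_2, …, x_N, x_{N+1}) = f(x_1, x_2, …, x_N, x_1·x_{N+1})`, and `f̂` is
quasihomogeneous of degree `1` for the reduced weights
`(2q_1, q_2, …, q_N, 1/2 − q_1)`. -/
theorem lift_to_first_chart (N : ℕ) (hN : 1 ≤ N)
    (q : Fin (N + 1) → ℚ) (hqlast : q (Fin.last N) = 1 / 2)
    (f : MvPolynomial (Fin (N + 1)) ℂ)
    (hqh : ∀ m ∈ f.support, ∑ i, (m i : ℚ) * q i = 1)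
    (hsym : ∀ m ∈ f.support, Even (m 0 + m (Fin.last N))) :
    ∃ fhat : MvPolynomial (Fin (N + 1)) ℂ,
      (aeval (fun i => if i = 0 then X 0 ^ 2 else X i :
          Fin (N + 1) → MvPolynomial (Fin (N + 1)) ℂ) fhat =
        aeval (fun i => if i = Fin.last N then X 0 * X (Fin.last N) else X i :
          Fin (N + 1) → MvPolynomial (Fin (N + 1)) ℂ) f) ∧
      (∀ g : MvPolynomial (Fin (N + 1)) ℂ,
        aeval (fun i => if i = 0 then X 0 ^ 2 else X i :
            Fin (N + 1) → MvPolynomial (Fin (N + 1)) ℂ) g =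
          aeval (fun i => if i = Fin.last N then X 0 * X (Fin.last N) else X i :
            Fin (N + 1) → MvPolynomial (Fin (N + 1)) ℂ) f → g = fhat) ∧
      ∀ m ∈ fhat.support,
        ∑ i, (m i : ℚ) *
          (if i = 0 then 2 * q 0 else if i = Fin.last N then 1 / 2 - q 0 else q i) = 1 := by
  classical
  have hlast0 : (Fin.last N : Fin (N + 1)) ≠ 0 := by
    simp only [ne_eq, Fin.ext_iff, Fin.val_last, Fin.val_zero]
    omega
  set sL : Fin (N + 1) → MvPolynomial (Fin (N + 1)) ℂ :=
    (fun i => if i = 0 then X 0 ^ 2 else X i) with hsLdef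
  set sR : Fin (N + 1) → MvPolynomial (Fin (N + 1)) ℂ :=
    (fun i => if i = Fin.last N then X 0 * X (Fin.last N) else X i) with hsRdef
  set dL : Fin (N + 1) → (Fin (N + 1) →₀ ℕ) :=
    fun i => if i = 0 then Finsupp.single 0 2 else Finsupp.single i 1 with hdL
  set dR : Fin (N + 1) → (Fin (N + 1) →₀ ℕ) :=
    fun i => if i = Fin.last N then Finsupp.single 0 1 + Finsupp.single (Fin.last N) 1
      else Finsupp.single i 1 with hdR
  have hsL : sL = fun i => monomial (dL i) (1 : ℂ) := by
    funext i
    by_cases h : i = 0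
    · simp only [hsLdef, hdL, h, if_pos rfl, X_pow_eq_monomial]
    · simp only [hsLdef, hdL, h, if_neg, ite_false]
      rw [← pow_one (X i), X_pow_eq_monomial]
  have hsR : sR = fun i => monomial (dR i) (1 : ℂ) := by
    funext i
    by_cases h : i = Fin.last N
    · simp only [hsRdef, hdR, h, if_pos rfl]
      rw [← pow_one (X 0), ← pow_one (X (Fin.last N)), X_pow_eq_monomial,
        X_pow_eq_monomial, MvPolynomial.monomial_mul, mul_one]
    · simp only [hsRdef, hdR, h, if_neg, ite_false]
      rw [← pow_one (X i), X_pow_eq_monomial]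
  -- closed forms for the exponent transformations
  have sumL : ∀ m : Fin (N + 1) →₀ ℕ,
      (m.sum fun i k => k • dL i) = m + Finsupp.single 0 (m 0) := by
    intro m
    induction m using Finsupp.induction_linear with
    | zero => simp
    | add u v hu hv =>
        rw [Finsupp.sum_add_index' (h := fun i k => k • dL i)
            (fun a => zero_smul ℕ (dL a)) (fun a b c => add_smul b c (dL a)),
          hu, hv]
        ext j
        by_cases h0j : (0 : Fin (N + 1)) = j <;>
          simp [Finsupp.add_apply, Finsupp.single_apply, h0j] <;> omega
    | single i k =>
        rw [Finsupp.sum_single_index (h := fun i k => k • dL i) (zero_smul ℕ (dL i))]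
        by_cases h : i = 0
        · subst h
          ext j
          by_cases h0j : (0 : Fin (N + 1)) = j <;>
            simp [hdL, Finsupp.smul_single, Finsupp.add_apply,
              Finsupp.single_apply, h0j] <;> omega
        · ext j
          simp only [hdL, if_neg h, Finsupp.smul_single, smul_eq_mul, mul_one,
            Finsupp.add_apply, Finsupp.single_apply]
          by_cases hj : i = j <;> by_cases hj0 : (0 : Fin (N+1)) = j <;>
            simp_all <;> omega
  have sumR : ∀ m : Fin (N + 1) →₀ ℕ,
      (m.sum fun i k => k • dR i) = m + Finsupp.single 0 (m (Fin.last N)) := by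
    intro m
    induction m using Finsupp.induction_linear with
    | zero => simp
    | add u v hu hv =>
        rw [Finsupp.sum_add_index' (h := fun i k => k • dR i)
            (fun a => zero_smul ℕ (dR a)) (fun a b c => add_smul b c (dR a)),
          hu, hv]
        ext j
        by_cases h0j : (0 : Fin (N + 1)) = j <;>
          simp [Finsupp.add_apply, Finsupp.single_apply, h0j] <;> omega
    | single i k =>
        rw [Finsupp.sum_single_index (h := fun i k => k • dR i) (zero_smul ℕ (dR i))]
        by_cases h : i = Fin.last N
        · subst h
          ext j
          by_cases h0j : (0 : Fin (N + 1)) = j <;>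
            by_cases hlj : Fin.last N = j <;>
              simp [hdR, smul_add, Finsupp.smul_single, Finsupp.add_apply,
                Finsupp.single_apply, h0j, hlj] <;> omega
        · ext j
          simp only [hdR, if_neg h, Finsupp.smul_single, smul_eq_mul, mul_one,
            Finsupp.add_apply, Finsupp.single_apply]
          by_cases hil : i = Fin.last N
          · exact absurd hil h
          · by_cases hj : i = j <;> by_cases hj0 : (0 : Fin (N+1)) = j <;>
              simp_all <;> omega
  -- description of the two substitutions on arbitrary polynomials
  have hDL : ∀ g : MvPolynomial (Fin (N + 1)) ℂ,
      aeval sL g = ∑ v ∈ g.support, monomial (v + Finsupp.single 0 (v 0)) (coeff v g) := by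
    intro g
    conv_lhs => rw [g.as_sum]
    rw [map_sum]
    refine Finset.sum_congr rfl fun v hv => ?_
    rw [hsL, aeval_mono_mono, sumL]
  have hDR : ∀ g : MvPolynomial (Fin (N + 1)) ℂ,
      aeval sR g = ∑ v ∈ g.support,
        monomial (v + Finsupp.single 0 (v (Fin.last N))) (coeff v g) := by
    intro g
    conv_lhs => rw [g.as_sum]
    rw [map_sum]
    refine Finset.sum_congr rfl fun v hv => ?_
    rw [hsR, aeval_mono_mono, sumR]
  -- injectivity of the exponent map for the left substitution
  have hinj : ∀ u v : Fin (N + 1) →₀ ℕ,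
      u + Finsupp.single 0 (u 0) = v + Finsupp.single 0 (v 0) → u = v := by
    intro u v h
    ext j
    by_cases hj : j = 0
    · subst hj
      have := DFunLike.congr_fun h 0
      simp [Finsupp.add_apply, Finsupp.single_apply] at this
      omega
    · have := DFunLike.congr_fun h j
      simpa [Finsupp.add_apply, Finsupp.single_apply, Ne.symm hj] using this
  -- coefficient extraction through the left substitution
  have hcoeff : ∀ (g : MvPolynomial (Fin (N + 1)) ℂ) (v : Fin (N + 1) →₀ ℕ),
      coeff (v + Finsupp.single 0 (v 0)) (aeval sL g) = coeff v g := by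
    intro g v
    rw [hDL g, MvPolynomial.coeff_sum]
    rw [Finset.sum_eq_single v
      (fun u hu hne => by
        rw [MvPolynomial.coeff_monomial, if_neg (fun h => hne (hinj u v h))])
      (fun hv => by
        simp [MvPolynomial.coeff_monomial, MvPolynomial.notMem_support_iff.mp hv])]
    simp [MvPolynomial.coeff_monomial]
  -- the transformed exponent
  set B : (Fin (N + 1) →₀ ℕ) → (Fin (N + 1) →₀ ℕ) :=
    fun m => Finsupp.erase 0 m +
      Finsupp.single 0 ((m 0 + m (Fin.last N)) / 2) with hB
  have hB0 : ∀ m, B m 0 = (m 0 + m (Fin.last N)) / 2 := by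
    intro m
    simp [hB, Finsupp.erase_same]
  have hBne : ∀ m (j : Fin (N + 1)), j ≠ 0 → B m j = m j := by
    intro m j hj
    simp [hB, Finsupp.erase_ne hj, Finsupp.single_apply, Ne.symm hj]
  set fhat : MvPolynomial (Fin (N + 1)) ℂ :=
    ∑ m ∈ f.support, monomial (B m) (coeff m f) with hfhat
  have hkey : ∀ m ∈ f.support,
      B m + Finsupp.single 0 (B m 0) = m + Finsupp.single 0 (m (Fin.last N)) := by
    intro m hm
    obtain ⟨t, ht⟩ := hsym m hm
    ext j
    by_cases hj : j = 0
    · subst hj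
      simp [Finsupp.add_apply, Finsupp.single_apply, hB0]
      omega
    · simp only [Finsupp.add_apply, Finsupp.single_apply, Ne.symm hj, if_neg, hBne m j hj]
      simp [Ne.symm hj]
  have hmain : aeval sL fhat = aeval sR f := by
    rw [hfhat, map_sum, hDR f]
    refine Finset.sum_congr rfl fun m hm => ?_
    rw [hsL, aeval_mono_mono, sumL, hkey m hm]
  refine ⟨fhat, hmain, ?_, ?_⟩
  · intro g hg
    have hgl : aeval sL g = aeval sL fhat := by rw [hg, hmain]
    ext v
    rw [← hcoeff g v, ← hcoeff fhat v, hgl]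
  · intro β hβ
    have hβne : coeff β fhat ≠ 0 := MvPolynomial.mem_support_iff.mp hβ
    rw [hfhat, MvPolynomial.coeff_sum] at hβne
    obtain ⟨m, hm, hmne⟩ := Finset.exists_ne_zero_of_sum_ne_zero hβne
    rw [MvPolynomial.coeff_monomial] at hmne
    have hβB : β = B m := by
      by_contra h
      exact hmne (if_neg (fun h' => h h'.symm))
    subst hβB
    obtain ⟨t, ht⟩ := hsym m hm
    have hqm := hqh m hm
    have h0last : (0 : Fin (N + 1)) ≠ Fin.last N := Ne.symm hlast0
    -- peel off the indices `Fin.last N` and `0` from both sums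
    rw [← Finset.sum_erase_add _ _ (Finset.mem_univ (Fin.last N)),
      ← Finset.sum_erase_add _ _
        (Finset.mem_erase.mpr ⟨h0last, Finset.mem_univ (0 : Fin (N + 1))⟩)]
    rw [← Finset.sum_erase_add _ _ (Finset.mem_univ (Fin.last N)),
      ← Finset.sum_erase_add _ _
        (Finset.mem_erase.mpr ⟨h0last, Finset.mem_univ (0 : Fin (N + 1))⟩)] at hqm
    have hsums : ∑ i ∈ (Finset.univ.erase (Fin.last N)).erase 0,
        (B m i : ℚ) * (if i = 0 then 2 * q 0 else if i = Fin.last N then 1 / 2 - q 0 else q i)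
        = ∑ i ∈ (Finset.univ.erase (Fin.last N)).erase 0, (m i : ℚ) * q i := by
      refine Finset.sum_congr rfl fun i hi => ?_
      obtain ⟨hi0, hil⟩ : i ≠ 0 ∧ i ≠ Fin.last N := by
        simpa [Finset.mem_erase] using hi
      rw [hBne m i hi0, if_neg hi0, if_neg hil]
    rw [hsums]
    have hBm0 : (B m 0 : ℚ) = t := by
      rw [hB0]
      norm_cast
      omega
    have hBml : (B m (Fin.last N) : ℚ) = (m (Fin.last N) : ℚ) :=
      by rw [hBne m _ hlast0]
    have htq : (m 0 : ℚ) + (m (Fin.last N) : ℚ) = 2 * t := by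
      have : m 0 + m (Fin.last N) = 2 * t := by omega
      exact_mod_cast congrArg (fun n : ℕ => (n : ℚ)) this
    rw [hqlast] at hqm
    rw [if_pos rfl, if_neg hlast0, if_pos rfl, hBm0, hBml]
    linear_combination hqm - q 0 * htq
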